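/- Let X be a Hausdorff semitopological semilattice and L ⊆ X a chain order-isomorphic to (α, min) for an ordinal α. If the closure of L has no maximum element, then L is cofinal in its closure and the closure of L is order-isomorphic to (α, min). -/

import Mathlib

/-- Let `X` be a Hausdorff semitopological semilattice and `L` a chain order-isomorphic to
`(α, min)` for an ordinal `α`.  If the closure of `L` has no maximum element, then `L` is
cofinal in its closure and the closure of `L` is order-isomorphic to `(α, min)`. -/
theorem closure_of_ordinal_chain {X : Type*} [SemilatticeInf X] [TopologicalSpace X] [T2Space X]
    (hcont : ∀ s : X, Continuous fun x => s ⊓ x)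
    (α : Ordinal) (L : Set X)
    (hiso : Nonempty ((Set.Iio α) ≃o L))
    (hnomax : ¬ ∃ m ∈ closure L, ∀ y ∈ closure L, y ≤ m) :
    (∀ y ∈ closure L, ∃ l ∈ L, y ≤ l) ∧ Nonempty ((Set.Iio α) ≃o (closure L)) := by
  obtain ⟨e⟩ := hiso
  -- closed upper/lower sets
  have hIic : ∀ s : X, IsClosed {x : X | x ≤ s} := by
    intro s
    have h : {x : X | x ≤ s} = {x : X | s ⊓ x = x} := by
      ext x; simp [inf_eq_right]
    rw [h]; exact isClosed_eq (hcont s) continuous_id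
  have hIci : ∀ s : X, IsClosed {x : X | s ≤ x} := by
    intro s
    have h : {x : X | s ≤ x} = {x : X | s ⊓ x = s} := by
      ext x; simp [inf_eq_left]
    rw [h]; exact isClosed_eq (hcont s) continuous_const
  -- L is a chain
  have hchain : ∀ a ∈ L, ∀ b ∈ L, a ≤ b ∨ b ≤ a := by
    intro a ha b hb
    rcases le_total (e.symm ⟨a, ha⟩) (e.symm ⟨b, hb⟩) with h | h
    · left
      have := e.monotone h
      simpa using this
    · right
      have := e.monotone h
      simpa using this
  -- every point of the closure is comparable with every point of L
  have comp : ∀ y ∈ closure L, ∀ l ∈ L, y ≤ l ∨ l ≤ y := by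
    intro y hy l hl
    have hsub : L ⊆ {x : X | x ≤ l} ∪ {x : X | l ≤ x} := by
      intro a ha
      rcases hchain a ha l hl with h | h
      · exact Or.inl h
      · exact Or.inr h
    exact closure_minimal hsub ((hIic l).union (hIci l)) hy
  -- any two points of the closure are comparable
  have comp2 : ∀ y ∈ closure L, ∀ z ∈ closure L, y ≤ z ∨ z ≤ y := by
    intro y hy z hz
    have hsub : L ⊆ {x : X | x ≤ y} ∪ {x : X | y ≤ x} := by
      intro a ha
      rcases comp y hy a ha with h | h
      · exact Or.inr h
      · exact Or.inl h
    rcases closure_minimal hsub ((hIic y).union (hIci y)) hz with h | h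
    · exact Or.inr h
    · exact Or.inl h
  -- the chain as an indexed family
  set l : Set.Iio α → X := fun ξ => (e ξ : X) with hl
  have hlmem : ∀ ξ, l ξ ∈ L := fun ξ => (e ξ).2
  have hlmono : ∀ {ξ ζ}, ξ ≤ ζ → l ξ ≤ l ζ := by
    intro ξ ζ h
    exact Subtype.coe_le_coe.2 (e.monotone h)
  have hlstrict : ∀ {ξ ζ}, ξ < ζ → ¬ l ζ ≤ l ξ := by
    intro ξ ζ h hle
    have : (e ζ : X) ≤ (e ξ : X) := hle
    have h2 : ζ ≤ ξ := e.le_iff_le.1 (Subtype.coe_le_coe.1 this)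
    exact absurd h2 (not_le.2 h)
  -- the "bad set" of indices
  set B : X → Set Ordinal := fun y => {ξ | ∃ h : ξ < α, ¬ l ⟨ξ, h⟩ ≤ y} with hB
  have hBne : ∀ y ∈ closure L, (B y).Nonempty := by
    intro y hy
    by_contra hne
    have hall : ∀ a ∈ L, a ≤ y := by
      intro a ha
      by_contra hno
      refine hne ⟨(e.symm ⟨a, ha⟩ : Set.Iio α).1, (e.symm ⟨a, ha⟩).2, ?_⟩
      have : l (e.symm ⟨a, ha⟩) = a := by
        simp [hl]
      simpa [this] using hno
    have : closure L ⊆ {x : X | x ≤ y} := closure_minimal hall (hIic y)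
    exact hnomax ⟨y, hy, fun z hz => this hz⟩
  -- ψ y : least index ξ with ¬ l ξ ≤ y
  have hψ : ∀ y ∈ closure L, ∃ ξ : Set.Iio α, (¬ l ξ ≤ y) ∧ ∀ ζ : Set.Iio α, ζ < ξ → l ζ ≤ y := by
    intro y hy
    obtain ⟨hlt, hnle⟩ := csInf_mem (hBne y hy)
    refine ⟨⟨sInf (B y), hlt⟩, hnle, ?_⟩
    intro ζ hζ
    by_contra hc
    have : sInf (B y) ≤ (ζ : Ordinal) := csInf_le (OrderBot.bddBelow _) ⟨ζ.2, hc⟩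
    exact absurd (lt_of_le_of_lt this hζ) (lt_irrefl _)
  choose ψ hψ1 hψ2 using hψ
  -- cofinality
  have hcof : ∀ y ∈ closure L, ∃ a ∈ L, y ≤ a := by
    intro y hy
    refine ⟨l (ψ y hy), hlmem _, ?_⟩
    rcases comp y hy _ (hlmem (ψ y hy)) with h | h
    · exact h
    · exact absurd h (hψ1 y hy)
  refine ⟨hcof, ?_⟩
  -- key step for strict monotonicity
  have hkey : ∀ y (hy : y ∈ closure L), ∀ z ∈ closure L, y < z → l (ψ y hy) ≤ z := by
    intro y hy z hz hlt
    have hsub : L ⊆ {x : X | x ≤ y} ∪ {x : X | l (ψ y hy) ≤ x} := by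
      intro a ha
      rcases lt_or_ge (e.symm ⟨a, ha⟩) (ψ y hy) with h | h
      · left
        have := hψ2 y hy _ h
        simpa [hl] using this
      · right
        have := hlmono h
        simpa [hl] using this
    rcases closure_minimal hsub ((hIic y).union (hIci (l (ψ y hy)))) hz with h | h
    · exact absurd (lt_of_lt_of_le hlt h) (lt_irrefl y)
    · exact h
  -- ψ is strictly monotone as a map closure L → Iio α
  have hmono : ∀ y (hy : y ∈ closure L) z (hz : z ∈ closure L), y < z → ψ y hy < ψ z hz := by
    intro y hy z hz hlt
    rcases lt_trichotomy (ψ y hy) (ψ z hz) with h | h | h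
    · exact h
    · exfalso
      exact hψ1 z hz (h ▸ hkey y hy z hz hlt)
    · exfalso
      have h1 : l (ψ z hz) ≤ y := hψ2 y hy _ h
      exact hψ1 z hz (h1.trans hlt.le)
  -- linear order on the closure
  letI : LinearOrder ↥(closure L) :=
    { (inferInstance : PartialOrder ↥(closure L)) with
      le_total := fun a b => by
        rcases comp2 a.1 a.2 b.1 b.2 with h | h
        · exact Or.inl (Subtype.coe_le_coe.1 h)
        · exact Or.inr (Subtype.coe_le_coe.1 h)
      toDecidableLE := fun _ _ => Classical.dec _ }
  -- the two embeddings
  let f : Set.Iio α ↪o ↥(closure L) :=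
    OrderEmbedding.ofStrictMono (fun ξ => ⟨l ξ, subset_closure (hlmem ξ)⟩)
      (by
        intro ξ ζ h
        have h1 : l ξ ≤ l ζ := hlmono h.le
        have h2 : l ξ ≠ l ζ := by
          intro hev
          exact hlstrict h (hev ▸ le_refl _)
        exact Subtype.mk_lt_mk.2 (lt_of_le_of_ne h1 h2))
  let g : ↥(closure L) ↪o Set.Iio α :=
    OrderEmbedding.ofStrictMono (fun y => ψ y.1 y.2)
      (fun y z h => hmono y.1 y.2 z.1 z.2 (Subtype.coe_lt_coe.2 h))
  haveI : WellFoundedLT ↥(closure L) := g.ltEmbedding.isWellFounded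
  have h1 := Ordinal.lift_type_le.{_,_,0}.2 ⟨g.ltEmbedding.collapse⟩
  have h2 := Ordinal.lift_type_le.{_,_,0}.2 ⟨f.ltEmbedding.collapse⟩
  obtain ⟨i⟩ := Ordinal.lift_type_eq.{_,_,0}.1 (le_antisymm h1 h2)
  exact ⟨(OrderIso.ofRelIsoLT i).symm⟩
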